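/- Let m,n ≥ 1 and let d be a choice of one diagonal per cell of the m×n grid, with triangulation graph T_d. Then T_d is 3-colorable if and only if T_d contains no induced subgraph isomorphic to T1 and no induced subgraph isomorphic to T2. -/
import Mathlib

/-- The edges of the 3×3 grid graph on vertices `0,…,8` (labels `1,…,9`, rows
`(1,2,3), (4,5,6), (7,8,9)` from top to bottom; vertex `i : Fin 9` has label `i+1`). -/
def gridEdges33 : Set (Sym2 (Fin 9)) :=
  {s(0, 1), s(1, 2), s(3, 4), s(4, 5), s(6, 7), s(7, 8),
   s(0, 3), s(1, 4), s(2, 5), s(3, 6), s(4, 7), s(5, 8)}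

/-- The triangulation `T1`: the 3×3 grid together with the diagonals
`{2,4}, {2,6}, {5,7}, {6,8}` (in labels `1,…,9`). -/
def T1 : SimpleGraph (Fin 9) :=
  SimpleGraph.fromEdgeSet (gridEdges33 ∪ {s(1, 3), s(1, 5), s(4, 6), s(5, 7)})

/-- The triangulation `T2`: the 3×3 grid together with the diagonals
`{1,5}, {3,5}, {5,9}, {4,8}` (in labels `1,…,9`). -/
def T2 : SimpleGraph (Fin 9) :=
  SimpleGraph.fromEdgeSet (gridEdges33 ∪ {s(0, 4), s(2, 4), s(4, 8), s(3, 7)})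
/-- The triangulation of the `m × n` grid graph (vertex set `{0,…,m} × {0,…,n}`)
determined by the choice `d` of a diagonal for each cell: all grid edges, plus for
each cell `(i,j)` the main diagonal `{(i,j),(i+1,j+1)}` if `d i j = 0` and the
anti-diagonal `{(i+1,j),(i,j+1)}` if `d i j = 1`. -/
def GridTri (m n : ℕ) (d : ℕ → ℕ → Fin 2) :
    SimpleGraph (Fin (m + 1) × Fin (n + 1)) :=
  SimpleGraph.fromRel fun p q =>
    (q.1.val = p.1.val + 1 ∧ q.2.val = p.2.val) ∨
    (q.1.val = p.1.val ∧ q.2.val = p.2.val + 1) ∨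
    (d p.1.val p.2.val = 0 ∧ q.1.val = p.1.val + 1 ∧ q.2.val = p.2.val + 1) ∨
    (d q.1.val p.2.val = 1 ∧ p.1.val = q.1.val + 1 ∧ q.2.val = p.2.val + 1)

/-! ### Auxiliary material -/

lemma gridTri_adj (m n : ℕ) (d : ℕ → ℕ → Fin 2) (p q : Fin (m+1) × Fin (n+1)) :
    (GridTri m n d).Adj p q ↔ p ≠ q ∧
    (((q.1.val = p.1.val + 1 ∧ q.2.val = p.2.val) ∨
    (q.1.val = p.1.val ∧ q.2.val = p.2.val + 1) ∨
    (d p.1.val p.2.val = 0 ∧ q.1.val = p.1.val + 1 ∧ q.2.val = p.2.val + 1) ∨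
    (d q.1.val p.2.val = 1 ∧ p.1.val = q.1.val + 1 ∧ q.2.val = p.2.val + 1)) ∨
    ((p.1.val = q.1.val + 1 ∧ p.2.val = q.2.val) ∨
    (p.1.val = q.1.val ∧ p.2.val = q.2.val + 1) ∨
    (d q.1.val q.2.val = 0 ∧ p.1.val = q.1.val + 1 ∧ p.2.val = q.2.val + 1) ∨
    (d p.1.val q.2.val = 1 ∧ q.1.val = p.1.val + 1 ∧ p.2.val = q.2.val + 1))) := by
  rw [GridTri, SimpleGraph.fromRel_adj]

instance gridTriDecAdj (m n : ℕ) (d : ℕ → ℕ → Fin 2) :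
    DecidableRel (GridTri m n d).Adj := fun p q =>
  decidable_of_iff _ (gridTri_adj m n d p q).symm

def edgeList1 : List (Fin 9 × Fin 9) :=
  [(0,1),(1,2),(3,4),(4,5),(6,7),(7,8),(0,3),(1,4),(2,5),(3,6),(4,7),(5,8),
   (1,3),(1,5),(4,6),(5,7)]

def edgeList2 : List (Fin 9 × Fin 9) :=
  [(0,1),(1,2),(3,4),(4,5),(6,7),(7,8),(0,3),(1,4),(2,5),(3,6),(4,7),(5,8),
   (0,4),(2,4),(4,8),(3,7)]

def adjL (l : List (Fin 9 × Fin 9)) (a b : Fin 9) : Bool :=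
  (a,b) ∈ l ∨ (b,a) ∈ l

lemma T1_adj_iff : ∀ a b, T1.Adj a b ↔ adjL edgeList1 a b = true := by
  simp only [T1, gridEdges33, SimpleGraph.fromEdgeSet_adj, Set.mem_union,
    Set.mem_insert_iff, Set.mem_singleton_iff]
  decide

lemma T2_adj_iff : ∀ a b, T2.Adj a b ↔ adjL edgeList2 a b = true := by
  simp only [T2, gridEdges33, SimpleGraph.fromEdgeSet_adj, Set.mem_union,
    Set.mem_insert_iff, Set.mem_singleton_iff]
  decide

instance : DecidableRel T1.Adj := fun a b => decidable_of_iff _ (T1_adj_iff a b).symm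
instance : DecidableRel T2.Adj := fun a b => decidable_of_iff _ (T2_adj_iff a b).symm

/-- `T1` is not 3-colorable: it contains an odd wheel (center `4`, 5-cycle `1-3-6-7-5`). -/
lemma T1_not_col : ¬ T1.Colorable 3 := by
  rintro ⟨c⟩
  have w5 : ∀ c0 c1 c2 c3 c4 c5 : Fin 3, ¬(c0≠c1 ∧ c0≠c2 ∧ c0≠c3 ∧ c0≠c4 ∧ c0≠c5 ∧
      c1≠c2 ∧ c2≠c3 ∧ c3≠c4 ∧ c4≠c5 ∧ c5≠c1) := by decide
  exact w5 (c 4) (c 1) (c 3) (c 6) (c 7) (c 5)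
    ⟨c.valid (by decide), c.valid (by decide), c.valid (by decide),
    c.valid (by decide), c.valid (by decide), c.valid (by decide),
    c.valid (by decide), c.valid (by decide), c.valid (by decide),
    c.valid (by decide)⟩

set_option synthInstance.maxSize 400 in
set_option maxHeartbeats 1000000 in
/-- `T2` is not 3-colorable: it contains an odd wheel (center `4`, 7-cycle). -/
lemma T2_not_col : ¬ T2.Colorable 3 := by
  rintro ⟨c⟩
  have w7 : ∀ c0 c1 c2 c3 c4 c5 c6 c7 : Fin 3, ¬(c0≠c1 ∧ c0≠c2 ∧ c0≠c3 ∧ c0≠c4 ∧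
      c0≠c5 ∧ c0≠c6 ∧ c0≠c7 ∧
      c1≠c2 ∧ c2≠c3 ∧ c3≠c4 ∧ c4≠c5 ∧ c5≠c6 ∧ c6≠c7 ∧ c7≠c1) := by decide
  exact w7 (c 4) (c 0) (c 1) (c 2) (c 5) (c 8) (c 7) (c 3)
    ⟨c.valid (by decide), c.valid (by decide), c.valid (by decide),
    c.valid (by decide), c.valid (by decide), c.valid (by decide),
    c.valid (by decide), c.valid (by decide), c.valid (by decide),
    c.valid (by decide), c.valid (by decide), c.valid (by decide),
    c.valid (by decide), c.valid (by decide)⟩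

lemma gridTri_congr (m n : ℕ) (d1 d2 : ℕ → ℕ → Fin 2)
    (h : ∀ a b, a < m → b < n → d1 a b = d2 a b) :
    GridTri m n d1 = GridTri m n d2 := by
  have H : ∀ (e1 e2 : ℕ → ℕ → Fin 2), (∀ a b, a < m → b < n → e1 a b = e2 a b) →
      ∀ p q : Fin (m+1) × Fin (n+1),
      ((q.1.val = p.1.val + 1 ∧ q.2.val = p.2.val) ∨
      (q.1.val = p.1.val ∧ q.2.val = p.2.val + 1) ∨
      (e1 p.1.val p.2.val = 0 ∧ q.1.val = p.1.val + 1 ∧ q.2.val = p.2.val + 1) ∨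
      (e1 q.1.val p.2.val = 1 ∧ p.1.val = q.1.val + 1 ∧ q.2.val = p.2.val + 1)) →
      ((q.1.val = p.1.val + 1 ∧ q.2.val = p.2.val) ∨
      (q.1.val = p.1.val ∧ q.2.val = p.2.val + 1) ∨
      (e2 p.1.val p.2.val = 0 ∧ q.1.val = p.1.val + 1 ∧ q.2.val = p.2.val + 1) ∨
      (e2 q.1.val p.2.val = 1 ∧ p.1.val = q.1.val + 1 ∧ q.2.val = p.2.val + 1)) := by
    rintro e1 e2 he p q (h1 | h1 | ⟨hd, h1, h2⟩ | ⟨hd, h1, h2⟩)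
    · exact Or.inl h1
    · exact Or.inr (Or.inl h1)
    · refine Or.inr (Or.inr (Or.inl ⟨?_, h1, h2⟩))
      have := q.1.isLt; have := q.2.isLt
      rw [← he _ _ (by omega) (by omega)]; exact hd
    · refine Or.inr (Or.inr (Or.inr ⟨?_, h1, h2⟩))
      have := p.1.isLt; have := q.2.isLt
      rw [← he _ _ (by omega) (by omega)]; exact hd
  have h' : ∀ a b, a < m → b < n → d2 a b = d1 a b := fun a b ha hb => (h a b ha hb).symm
  ext p q
  rw [gridTri_adj, gridTri_adj]
  exact and_congr_right fun _ => or_congr ⟨H d1 d2 h p q, H d2 d1 h' p q⟩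
    ⟨H d1 d2 h q p, H d2 d1 h' q p⟩

/-- The induced embedding of the triangulated `2 × 2` patch at `(i,j)` in the big grid. -/
lemma patch_emb (m n i j : ℕ) (d : ℕ → ℕ → Fin 2) (hi : i + 2 ≤ m) (hj : j + 2 ≤ n) :
    Nonempty ((GridTri 2 2 (fun a b => d (i+a) (j+b))) ↪g GridTri m n d) := by
  have hinj : Function.Injective (fun p : Fin 3 × Fin 3 =>
      ((⟨i + p.1.val, by have := p.1.isLt; omega⟩ : Fin (m+1)),
       (⟨j + p.2.val, by have := p.2.isLt; omega⟩ : Fin (n+1)))) := by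
    intro p q hpq
    rw [Prod.ext_iff] at hpq
    obtain ⟨h1, h2⟩ := hpq
    rw [Fin.mk.injEq] at h1 h2
    exact Prod.ext (Fin.ext (by omega)) (Fin.ext (by omega))
  refine ⟨⟨⟨_, hinj⟩, ?_⟩⟩
  intro p q
  rw [gridTri_adj, gridTri_adj]
  simp only [Function.Embedding.coeFn_mk]
  constructor
  · rintro ⟨hne, hrel⟩
    refine ⟨fun hh => hne (by rw [hh]), ?_⟩
    rcases hrel with (⟨h1,h2⟩|⟨h1,h2⟩|⟨hd,h1,h2⟩|⟨hd,h1,h2⟩)|(⟨h1,h2⟩|⟨h1,h2⟩|⟨hd,h1,h2⟩|⟨hd,h1,h2⟩)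
    · exact Or.inl (Or.inl ⟨by omega, by omega⟩)
    · exact Or.inl (Or.inr (Or.inl ⟨by omega, by omega⟩))
    · exact Or.inl (Or.inr (Or.inr (Or.inl ⟨hd, by omega, by omega⟩)))
    · exact Or.inl (Or.inr (Or.inr (Or.inr ⟨hd, by omega, by omega⟩)))
    · exact Or.inr (Or.inl ⟨by omega, by omega⟩)
    · exact Or.inr (Or.inr (Or.inl ⟨by omega, by omega⟩))
    · exact Or.inr (Or.inr (Or.inr (Or.inl ⟨hd, by omega, by omega⟩)))
    · exact Or.inr (Or.inr (Or.inr (Or.inr ⟨hd, by omega, by omega⟩)))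
  · rintro ⟨hne, hrel⟩
    refine ⟨fun hh => hne (hinj hh), ?_⟩
    rcases hrel with (⟨h1,h2⟩|⟨h1,h2⟩|⟨hd,h1,h2⟩|⟨hd,h1,h2⟩)|(⟨h1,h2⟩|⟨h1,h2⟩|⟨hd,h1,h2⟩|⟨hd,h1,h2⟩)
    · exact Or.inl (Or.inl ⟨by omega, by omega⟩)
    · exact Or.inl (Or.inr (Or.inl ⟨by omega, by omega⟩))
    · exact Or.inl (Or.inr (Or.inr (Or.inl ⟨hd, by omega, by omega⟩)))
    · exact Or.inl (Or.inr (Or.inr (Or.inr ⟨hd, by omega, by omega⟩)))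
    · exact Or.inr (Or.inl ⟨by omega, by omega⟩)
    · exact Or.inr (Or.inr (Or.inl ⟨by omega, by omega⟩))
    · exact Or.inr (Or.inr (Or.inr (Or.inl ⟨hd, by omega, by omega⟩)))
    · exact Or.inr (Or.inr (Or.inr (Or.inr ⟨hd, by omega, by omega⟩)))

/-- A `2 × 2` configuration of diagonals given by four values. -/
def E4 (w00 w10 w01 w11 : Fin 2) : ℕ → ℕ → Fin 2 := fun a b =>
  if a = 0 then (if b = 0 then w00 else w01) else (if b = 0 then w10 else w11)

def mkEmb {G : SimpleGraph (Fin 9)} {G' : SimpleGraph (Fin 3 × Fin 3)}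
    (f : Fin 9 → Fin 3 × Fin 3) (hinj : Function.Injective f)
    (h : ∀ a b, G'.Adj (f a) (f b) ↔ G.Adj a b) : G ↪g G' := ⟨⟨f, hinj⟩, h _ _⟩

/-- Every odd `2 × 2` configuration contains an induced copy of `T1` or `T2`. -/
lemma odd_block_emb (w00 w10 w01 w11 : Fin 2)
    (h : (w00.val + w10.val + w01.val + w11.val) % 2 = 1) :
    Nonempty (T1 ↪g GridTri 2 2 (E4 w00 w10 w01 w11)) ∨
    Nonempty (T2 ↪g GridTri 2 2 (E4 w00 w10 w01 w11)) := by
  fin_cases w00 <;> fin_cases w10 <;> fin_cases w01 <;> fin_cases w11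
  · exact absurd h (by decide)
  · exact Or.inl ⟨mkEmb ![(2,0),(2,1),(2,2),(1,0),(1,1),(1,2),(0,0),(0,1),(0,2)]
      (by decide) (by decide)⟩
  · exact Or.inr ⟨mkEmb ![(0,0),(0,1),(0,2),(1,0),(1,1),(1,2),(2,0),(2,1),(2,2)]
      (by decide) (by decide)⟩
  · exact absurd h (by decide)
  · exact Or.inr ⟨mkEmb ![(2,2),(2,1),(2,0),(1,2),(1,1),(1,0),(0,2),(0,1),(0,0)]
      (by decide) (by decide)⟩
  · exact absurd h (by decide)
  · exact absurd h (by decide)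
  · exact Or.inr ⟨mkEmb ![(0,2),(0,1),(0,0),(1,2),(1,1),(1,0),(2,2),(2,1),(2,0)]
      (by decide) (by decide)⟩
  · exact Or.inl ⟨mkEmb ![(0,2),(0,1),(0,0),(1,2),(1,1),(1,0),(2,2),(2,1),(2,0)]
      (by decide) (by decide)⟩
  · exact absurd h (by decide)
  · exact absurd h (by decide)
  · exact Or.inl ⟨mkEmb ![(2,2),(2,1),(2,0),(1,2),(1,1),(1,0),(0,2),(0,1),(0,0)]
      (by decide) (by decide)⟩
  · exact absurd h (by decide)
  · exact Or.inl ⟨mkEmb ![(0,0),(0,1),(0,2),(1,0),(1,1),(1,2),(2,0),(2,1),(2,2)]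
      (by decide) (by decide)⟩
  · exact Or.inr ⟨mkEmb ![(2,0),(2,1),(2,2),(1,0),(1,1),(1,2),(0,0),(0,1),(0,2)]
      (by decide) (by decide)⟩
  · exact absurd h (by decide)

/-- Parity identity: if all `2 × 2` blocks of cells have an even number of
anti-diagonals, then `d` splits as a sum of a row function and a column function. -/
lemma d_formula (m n : ℕ) (d : ℕ → ℕ → Fin 2)
    (hE : ∀ i j, i + 1 < m → j + 1 < n →
      ((d i j).val + (d (i+1) j).val + (d i (j+1)).val + (d (i+1) (j+1)).val) % 2 = 0) :
    ∀ i, i < m → ∀ j, j < n →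
      ((d i j).val + (d i 0).val + (d 0 j).val + (d 0 0).val) % 2 = 0 := by
  intro i
  induction i with
  | zero => intro _ j _; omega
  | succ i ih =>
    intro hi1 j
    induction j with
    | zero => intro _; omega
    | succ j ihj =>
      intro hj1
      have h1 := ih (by omega) j (by omega)
      have h2 := ih (by omega) (j+1) hj1
      have h3 := ihj (by omega)
      have h4 := hE i j (by omega) (by omega)
      omega

def colF (d : ℕ → ℕ → Fin 2) : ℕ → ZMod 3
  | 0 => 0
  | i+1 => colF d i + (if ((d i 0).val + (d 0 0).val) % 2 = 0 then 1 else 2)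

def colG (d : ℕ → ℕ → Fin 2) : ℕ → ZMod 3
  | 0 => 0
  | j+1 => colG d j + (if (d 0 j).val % 2 = 0 then 1 else 2)

/-- If every `2 × 2` block of cells has an even number of anti-diagonals, then the
triangulation is 3-colorable. -/
lemma colorable_of_even (m n : ℕ) (d : ℕ → ℕ → Fin 2)
    (hE : ∀ i j, i + 1 < m → j + 1 < n →
      ((d i j).val + (d (i+1) j).val + (d i (j+1)).val + (d (i+1) (j+1)).val) % 2 = 0) :
    (GridTri m n d).Colorable 3 := by
  set F := colF d with hF
  set G := colG d with hG
  set incF : ℕ → ZMod 3 := fun i => if ((d i 0).val + (d 0 0).val) % 2 = 0 then 1 else 2 with hincF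
  set incG : ℕ → ZMod 3 := fun j => if (d 0 j).val % 2 = 0 then 1 else 2 with hincG
  have hFs : ∀ i, F (i+1) = F i + incF i := fun i => rfl
  have hGs : ∀ j, G (j+1) = G j + incG j := fun j => rfl
  have key : ∀ i j, i < m → j < n → (incF i = incG j ↔ (d i j).val % 2 = 0) := by
    intro i j hi hj
    have hd := d_formula m n d hE i hi j hj
    simp only [hincF, hincG]
    split_ifs with h1 h2 h2
    · simp only [true_iff]; omega
    · constructor
      · intro hc; exact absurd hc (by decide)
      · intro hc; omega
    · constructor
      · intro hc; exact absurd hc (by decide)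
      · intro hc; omega
    · simp only [true_iff]; omega
  have main : ∀ p q : Fin (m+1) × Fin (n+1),
      ((q.1.val = p.1.val + 1 ∧ q.2.val = p.2.val) ∨
      (q.1.val = p.1.val ∧ q.2.val = p.2.val + 1) ∨
      (d p.1.val p.2.val = 0 ∧ q.1.val = p.1.val + 1 ∧ q.2.val = p.2.val + 1) ∨
      (d q.1.val p.2.val = 1 ∧ p.1.val = q.1.val + 1 ∧ q.2.val = p.2.val + 1)) →
      F p.1.val + G p.2.val ≠ F q.1.val + G q.2.val := by
    rintro p q (⟨h1, h2⟩ | ⟨h1, h2⟩ | ⟨hd, h1, h2⟩ | ⟨hd, h1, h2⟩) heq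
    · rw [h1, h2, hFs] at heq
      have : incF p.1.val ≠ 0 := by
        simp only [hincF]; split_ifs <;> decide
      apply this
      have := add_right_cancel heq
      linear_combination -this
    · rw [h1, h2, hGs] at heq
      have : incG p.2.val ≠ 0 := by
        simp only [hincG]; split_ifs <;> decide
      apply this
      linear_combination -heq
    · rw [h1, h2, hFs, hGs] at heq
      have hb1 : p.1.val < m := by have := q.1.isLt; omega
      have hb2 : p.2.val < n := by have := q.2.isLt; omega
      have heq2 : incF p.1.val + incG p.2.val = 0 := by linear_combination -heq
      have hk := (key _ _ hb1 hb2).2 (by rw [hd]; rfl)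
      rw [hk] at heq2
      revert heq2
      simp only [hincG]; split_ifs <;> decide
    · rw [h1, h2, hFs, hGs] at heq
      have hb1 : q.1.val < m := by have := p.1.isLt; omega
      have hb2 : p.2.val < n := by have := q.2.isLt; omega
      have heq2 : incF q.1.val = incG p.2.val := by linear_combination heq
      have : (d q.1.val p.2.val).val % 2 = 0 := (key _ _ hb1 hb2).1 heq2
      rw [hd] at this
      exact absurd this (by decide)
  have C : (GridTri m n d).Coloring (ZMod 3) := by
    apply SimpleGraph.Coloring.mk (fun p => F p.1.val + G p.2.val)
    intro p q hadj
    rw [GridTri, SimpleGraph.fromRel_adj] at hadj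
    obtain ⟨hne, hrel | hrel⟩ := hadj
    · exact main p q hrel
    · exact fun h => main q p hrel h.symm
  have := C.colorable
  rwa [ZMod.card] at this

/-- A triangulation of the `m × n` grid graph is 3-colorable if and only if it contains
no induced subgraph isomorphic to `T1` or `T2`. -/
theorem gridTri_colorable_iff_no_T1_T2
    (m n : ℕ) (hm : 1 ≤ m) (hn : 1 ≤ n) (d : ℕ → ℕ → Fin 2) :
    (GridTri m n d).Colorable 3 ↔
      (¬ Nonempty (T1 ↪g GridTri m n d) ∧ ¬ Nonempty (T2 ↪g GridTri m n d)) := by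
  constructor
  · rintro ⟨C⟩
    constructor
    · rintro ⟨φ⟩
      exact T1_not_col ⟨SimpleGraph.Hom.comp C φ.toHom⟩
    · rintro ⟨φ⟩
      exact T2_not_col ⟨SimpleGraph.Hom.comp C φ.toHom⟩
  · rintro ⟨h1, h2⟩
    by_cases hE : ∀ i j, i + 1 < m → j + 1 < n →
      ((d i j).val + (d (i+1) j).val + (d i (j+1)).val + (d (i+1) (j+1)).val) % 2 = 0
    · exact colorable_of_even m n d hE
    · push_neg at hE
      obtain ⟨i, j, hi, hj, hodd⟩ := hE
      have hodd' : ((d i j).val + (d (i+1) j).val + (d i (j+1)).val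
          + (d (i+1) (j+1)).val) % 2 = 1 := by omega
      have heq : GridTri 2 2 (fun a b => d (i+a) (j+b)) =
          GridTri 2 2 (E4 (d i j) (d (i+1) j) (d i (j+1)) (d (i+1) (j+1))) := by
        apply gridTri_congr
        intro a b ha hb
        interval_cases a <;> interval_cases b <;> simp [E4]
      obtain ⟨pe⟩ := patch_emb m n i j d (by omega) (by omega)
      rw [heq] at pe
      rcases odd_block_emb _ _ _ _ hodd' with hne | hne
      · exact absurd (hne.map fun φ => pe.comp φ) h1
      · exact absurd (hne.map fun φ => pe.comp φ) h2
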